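/- Any graph G with average degree d(G) > k - 1 contains a path of length k (with k edges). -/

import Mathlib

open SimpleGraph Finset

section EG
variable {V : Type*} {G : SimpleGraph V}

lemma eg_getVert_inj {x y : V} {p : G.Walk x y} (hp : p.IsPath) :
    ∀ i j, i ≤ p.length → j ≤ p.length → p.getVert i = p.getVert j → i = j := by
  induction p with
  | nil =>
    intro i j hi hj _
    simp only [SimpleGraph.Walk.length_nil, Nat.le_zero] at hi hj
    omega
  | cons h q ih =>
    rename_i u v w
    rw [SimpleGraph.Walk.cons_isPath_iff] at hp
    intro i j hi hj hij
    match i, j with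
    | 0, 0 => rfl
    | 0, j+1 =>
      exfalso
      apply hp.2
      rw [SimpleGraph.Walk.mem_support_iff_exists_getVert]
      refine ⟨j, ?_, by simpa using hj⟩
      have : (SimpleGraph.Walk.cons h q).getVert (j+1) = q.getVert j := rfl
      rw [← this, ← hij]; rfl
    | i+1, 0 =>
      exfalso
      apply hp.2
      rw [SimpleGraph.Walk.mem_support_iff_exists_getVert]
      refine ⟨i, ?_, by simpa using hi⟩
      have : (SimpleGraph.Walk.cons h q).getVert (i+1) = q.getVert i := rfl
      rw [← this, hij]; rfl
    | i+1, j+1 =>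
      have := ih hp.1 i j (by simpa using hi) (by simpa using hj) hij
      omega

/-- Build a path from an injective locally-adjacent index function. -/
lemma eg_walk_of_fn : ∀ (m : ℕ) (f : ℕ → V),
    (∀ i < m, G.Adj (f i) (f (i+1))) →
    (∀ i ≤ m, ∀ j ≤ m, f i = f j → i = j) →
    ∃ p : G.Walk (f 0) (f m), p.IsPath ∧ p.length = m ∧ ∀ j ≤ m, p.getVert j = f j := by
  intro m
  induction m with
  | zero =>
    intro f _ _
    exact ⟨SimpleGraph.Walk.nil, SimpleGraph.Walk.IsPath.nil, rfl, by
      intro j hj; interval_cases j; rfl⟩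
  | succ m ih =>
    intro f hadj hinj
    obtain ⟨q, hq, hql, hqv⟩ := ih (fun i => f (i+1))
      (fun i hi => hadj (i+1) (by omega))
      (fun i hi j hj hij => by
        have := hinj (i+1) (by omega) (j+1) (by omega) hij; omega)
    refine ⟨SimpleGraph.Walk.cons (hadj 0 (by omega)) q, ?_, by simp [hql], ?_⟩
    · refine hq.cons ?_
      rw [SimpleGraph.Walk.mem_support_iff_exists_getVert]
      rintro ⟨n, hn, hn'⟩
      rw [hql] at hn'
      rw [hqv n hn'] at hn
      have := hinj (n+1) (by omega) 0 (by omega) hn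
      omega
    · intro j hj
      match j with
      | 0 => rfl
      | j+1 =>
        rw [SimpleGraph.Walk.getVert_cons_succ]
        exact hqv j (by omega)

/-- Truncate a path to any shorter length. -/
lemma eg_truncate {x y : V} (p : G.Walk x y) (hp : p.IsPath) :
    ∀ k ≤ p.length, ∃ (a b : V) (q : G.Walk a b), q.IsPath ∧ q.length = k := by
  induction p with
  | nil =>
    rename_i u
    intro k hk
    simp only [SimpleGraph.Walk.length_nil, Nat.le_zero] at hk
    subst hk
    exact ⟨u, u, SimpleGraph.Walk.nil, SimpleGraph.Walk.IsPath.nil, SimpleGraph.Walk.length_nil⟩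
  | cons h q ih =>
    intro k hk
    rcases eq_or_lt_of_le hk with hk' | hk'
    · exact ⟨_, _, _, hp, hk'.symm⟩
    · exact ih hp.of_cons k (by simpa [Nat.lt_succ_iff] using hk')

/-- A walk from outside a set to inside it crosses the boundary. -/
lemma eg_crossing {S : Set V} : ∀ {a b : V} (_ : G.Walk a b), a ∉ S → b ∈ S →
    ∃ u w, u ∉ S ∧ w ∈ S ∧ G.Adj u w := by
  intro a b p
  induction p with
  | nil => intro ha hb; exact absurd hb ha
  | cons h q ih =>
    rename_i u v w
    intro ha hb
    by_cases hv : v ∈ S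
    · exact ⟨u, v, ha, hv, h⟩
    · exact ih hv hb

def egσ (l i j t : ℕ) : ℕ :=
  if t ≤ j + 1 then j + 1 - t
  else if t ≤ l - i + j + 1 then t + i - j - 1 else l + j + 2 - t

lemma eg_rotation {x y : V} {p : G.Walk x y} (hp : p.IsPath) {l i j : ℕ}
    (hl : p.length = l) (hij : j ≤ i) (hi : i < l)
    (hxa : G.Adj x (p.getVert (i+1))) (hyb : G.Adj y (p.getVert i))
    {u : V} (hu : u ∉ p.support) (huw : G.Adj u (p.getVert j)) :
    ∃ (a b : V) (q : G.Walk a b), q.IsPath ∧ q.length = l + 1 := by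
  have hj : j < l := lt_of_le_of_lt hij hi
  let σ : ℕ → ℕ := egσ l i j
  let f : ℕ → V := fun t => if t = 0 then u else p.getVert (σ t)
  have hσ : ∀ t, σ t = if t ≤ j + 1 then j + 1 - t
    else if t ≤ l - i + j + 1 then t + i - j - 1 else l + j + 2 - t := fun t => rfl
  have hf : ∀ t, f t = if t = 0 then u else p.getVert (σ t) := fun t => rfl
  have hσle : ∀ t, 1 ≤ t → t ≤ l + 1 → σ t ≤ l := by
    intro t h1 h2; rw [hσ]; split_ifs <;> omega
  have hfpos : ∀ t, 1 ≤ t → f t = p.getVert (σ t) := by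
    intro t h1; rw [hf, if_neg (by omega)]
  have hx0 : p.getVert 0 = x := p.getVert_zero
  have hyl : p.getVert l = y := by rw [← hl]; exact p.getVert_length
  have hinj : ∀ s ≤ l + 1, ∀ t ≤ l + 1, f s = f t → s = t := by
    intro s hs t ht hst
    rcases s with _ | s <;> rcases t with _ | t
    · rfl
    · exfalso; apply hu
      rw [hfpos (t+1) (by omega)] at hst
      rw [SimpleGraph.Walk.mem_support_iff_exists_getVert]
      exact ⟨σ (t+1), by rw [← hst, hf, if_pos rfl], by rw [hl]; exact hσle _ (by omega) ht⟩
    · exfalso; apply hu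
      rw [hfpos (s+1) (by omega)] at hst
      rw [SimpleGraph.Walk.mem_support_iff_exists_getVert]
      exact ⟨σ (s+1), by rw [hst, hf, if_pos rfl], by rw [hl]; exact hσle _ (by omega) hs⟩
    · rw [hfpos (s+1) (by omega), hfpos (t+1) (by omega)] at hst
      have := eg_getVert_inj hp (σ (s+1)) (σ (t+1))
        (by rw [hl]; exact hσle _ (by omega) hs) (by rw [hl]; exact hσle _ (by omega) ht) hst
      rw [hσ (s+1), hσ (t+1)] at this
      split_ifs at this <;> omega
  have hadj : ∀ t, t < l + 1 → G.Adj (f t) (f (t+1)) := by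
    intro t ht
    rcases Nat.eq_zero_or_pos t with h0 | h1
    · subst h0
      have e1 : σ 1 = j := by rw [hσ]; split_ifs <;> omega
      have : f 1 = p.getVert j := by rw [hfpos 1 le_rfl, e1]
      rw [this]
      rw [hf, if_pos rfl]
      exact huw
    rw [hfpos t h1, hfpos (t+1) (by omega)]
    by_cases hc1 : t ≤ j
    · have e1 : σ t = j - t + 1 := by rw [hσ]; split_ifs <;> omega
      have e2 : σ (t+1) = j - t := by rw [hσ]; split_ifs <;> omega
      rw [e1, e2]
      exact (p.adj_getVert_succ (by omega)).symm
    by_cases hc2 : t = j + 1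
    · have e1 : σ t = 0 := by rw [hσ]; split_ifs <;> omega
      have e2 : σ (t+1) = i + 1 := by rw [hσ]; split_ifs <;> omega
      rw [e1, e2, hx0]
      exact hxa
    by_cases hc3 : t ≤ l - i + j
    · have e1 : σ t = t + i - j - 1 := by rw [hσ]; split_ifs <;> omega
      have e2 : σ (t+1) = t + i - j := by rw [hσ]; split_ifs <;> omega
      rw [e1, e2]
      have := p.adj_getVert_succ (i := t + i - j - 1) (by omega)
      have e3 : t + i - j - 1 + 1 = t + i - j := by omega
      rwa [e3] at this
    by_cases hc4 : t = l - i + j + 1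
    · have e1 : σ t = l := by rw [hσ]; split_ifs <;> omega
      have e2 : σ (t+1) = i := by rw [hσ]; split_ifs <;> omega
      rw [e1, e2, hyl]
      exact hyb
    · have e1 : σ t = l + j + 2 - t := by rw [hσ]; split_ifs <;> omega
      have e2 : σ (t+1) = l + j + 1 - t := by rw [hσ]; split_ifs <;> omega
      rw [e1, e2]
      have := p.adj_getVert_succ (i := l + j + 1 - t) (by omega)
      have e3 : l + j + 1 - t + 1 = l + j + 2 - t := by omega
      rw [e3] at this
      exact this.symm
  obtain ⟨q, hq, hql, -⟩ := eg_walk_of_fn (l+1) f hadj (fun a ha b hb => hinj a ha b hb)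
  exact ⟨f 0, f (l+1), q, hq, hql⟩

lemma eg_connected [Fintype V] [DecidableEq V] {G : SimpleGraph V} [DecidableRel G.Adj]
    (hc : G.Connected) (k : ℕ) (hdeg : ∀ v, k ≤ 2 * G.degree v)
    (hcard : k + 1 ≤ Fintype.card V) :
    ∃ (a b : V) (q : G.Walk a b), q.IsPath ∧ q.length = k := by
  classical
  have hne : Nonempty V := hc.nonempty
  obtain ⟨v0⟩ := hne
  set N := Fintype.card V with hN
  set P : ℕ → Prop := fun n => ∃ (a b : V) (q : G.Walk a b), q.IsPath ∧ q.length = n with hPdef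
  have hP0 : P 0 := ⟨v0, v0, SimpleGraph.Walk.nil, SimpleGraph.Walk.IsPath.nil, rfl⟩
  set l := Nat.findGreatest P N with hldef
  have hPl : P l := Nat.findGreatest_spec (Nat.zero_le N) hP0
  by_cases hkl : k ≤ l
  · obtain ⟨a, b, q, hq, hql⟩ := hPl
    exact eg_truncate q hq k (by omega)
  push_neg at hkl
  exfalso
  obtain ⟨x, y, p, hp, hpl⟩ := hPl
  have hmax : ¬ P (l + 1) := Nat.findGreatest_is_greatest (n := N) (by omega) (by omega)
  -- endpoints have all neighbors on the path
  have hxs : ∀ z, G.Adj x z → z ∈ p.support := by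
    intro z hz
    by_contra hzs
    exact hmax ⟨z, y, SimpleGraph.Walk.cons hz.symm p, hp.cons hzs, by simp [hpl]⟩
  have hys : ∀ z, G.Adj y z → z ∈ p.support := by
    intro z hz
    by_contra hzs
    refine hmax ⟨z, x, SimpleGraph.Walk.cons hz.symm p.reverse, ?_, by simp [hpl]⟩
    exact hp.reverse.cons (by simpa using hzs)
  set A := (Finset.range l).filter (fun t => G.Adj x (p.getVert (t+1))) with hAdef
  set B := (Finset.range l).filter (fun t => G.Adj y (p.getVert t)) with hBdef
  have hA : A.card = G.degree x := by
    rw [← SimpleGraph.card_neighborFinset_eq_degree]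
    apply Finset.card_bij (fun t _ => p.getVert (t+1))
    · intro a ha
      simp only [hAdef, Finset.mem_filter, Finset.mem_range] at ha
      rw [SimpleGraph.mem_neighborFinset]
      exact ha.2
    · intro a ha b hb hab
      simp only [hAdef, Finset.mem_filter, Finset.mem_range] at ha hb
      have := eg_getVert_inj hp (a+1) (b+1) (by omega) (by omega) hab
      omega
    · intro z hz
      rw [SimpleGraph.mem_neighborFinset] at hz
      obtain ⟨n, hn1, hn2⟩ := SimpleGraph.Walk.mem_support_iff_exists_getVert.mp (hxs z hz)
      have hn0 : n ≠ 0 := by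
        intro h; subst h
        rw [p.getVert_zero] at hn1
        exact hz.ne hn1
      refine ⟨n - 1, ?_, ?_⟩
      · simp only [hAdef, Finset.mem_filter, Finset.mem_range]
        constructor
        · omega
        · rw [show n - 1 + 1 = n by omega, hn1]; exact hz
      · rw [show n - 1 + 1 = n by omega, hn1]
  have hB : B.card = G.degree y := by
    rw [← SimpleGraph.card_neighborFinset_eq_degree]
    apply Finset.card_bij (fun t _ => p.getVert t)
    · intro a ha
      simp only [hBdef, Finset.mem_filter, Finset.mem_range] at ha
      rw [SimpleGraph.mem_neighborFinset]
      exact ha.2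
    · intro a ha b hb hab
      simp only [hBdef, Finset.mem_filter, Finset.mem_range] at ha hb
      exact eg_getVert_inj hp a b (by omega) (by omega) hab
    · intro z hz
      rw [SimpleGraph.mem_neighborFinset] at hz
      obtain ⟨n, hn1, hn2⟩ := SimpleGraph.Walk.mem_support_iff_exists_getVert.mp (hys z hz)
      rw [hpl] at hn2
      have hyvl : p.getVert l = y := by rw [← hpl]; exact p.getVert_length
      have hnl : n ≠ l := by
        intro h; subst h
        rw [hyvl] at hn1
        exact hz.ne hn1
      refine ⟨n, ?_, hn1⟩
      simp only [hBdef, Finset.mem_filter, Finset.mem_range]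
      refine ⟨by omega, ?_⟩
      rw [hn1]; exact hz
  -- pigeonhole
  have hABcard : l < A.card + B.card := by
    have h1 := hdeg x
    have h2 := hdeg y
    omega
  have hAB : (A ∩ B).Nonempty := by
    rw [← Finset.card_pos]
    have hle : (A ∪ B).card ≤ l := by
      have : A ∪ B ⊆ Finset.range l := by
        apply Finset.union_subset <;>
          simp only [hAdef, hBdef] <;> exact Finset.filter_subset _ _
      simpa using Finset.card_le_card this
    have := Finset.card_union_add_card_inter A B
    omega
  obtain ⟨i, hi⟩ := hAB
  rw [Finset.mem_inter] at hi
  obtain ⟨hiA, hiB⟩ := hi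
  simp only [hAdef, Finset.mem_filter, Finset.mem_range] at hiA
  simp only [hBdef, Finset.mem_filter, Finset.mem_range] at hiB
  obtain ⟨hil, hxa⟩ := hiA
  obtain ⟨-, hyb⟩ := hiB
  -- a vertex off the path
  have hout : ∃ u, u ∉ p.support := by
    by_contra hco
    push_neg at hco
    have h1 : (Finset.univ : Finset V) ⊆ p.support.toFinset := by
      intro z _; rw [List.mem_toFinset]; exact hco z
    have h2 := Finset.card_le_card h1
    rw [List.toFinset_card_of_nodup hp.support_nodup, SimpleGraph.Walk.length_support, hpl] at h2
    simp only [Finset.card_univ] at h2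
    omega
  obtain ⟨u0, hu0⟩ := hout
  obtain ⟨u, w, hu, hw, huw⟩ := eg_crossing (S := {z | z ∈ p.support})
    ((hc.preconnected u0 x).some) hu0 (p.start_mem_support)
  obtain ⟨j, hj1, hj2⟩ := SimpleGraph.Walk.mem_support_iff_exists_getVert.mp hw
  rw [hpl] at hj2
  by_cases hji : j ≤ i
  · exact hmax (eg_rotation hp hpl hji hil hxa hyb hu (by rw [hj1]; exact huw))
  · push_neg at hji
    have hl1 : 1 ≤ l := by omega
    have hrl : p.reverse.length = l := by rw [SimpleGraph.Walk.length_reverse, hpl]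
    have hrv : ∀ n ≤ l, p.reverse.getVert n = p.getVert (l - n) := by
      intro n _
      rw [SimpleGraph.Walk.getVert_reverse, hpl]
    refine hmax (eg_rotation hp.reverse hrl (i := l - i - 1) (j := l - j) (by omega) (by omega)
      ?_ ?_ (by rwa [SimpleGraph.Walk.support_reverse, List.mem_reverse]) ?_)
    · rw [hrv (l - i - 1 + 1) (by omega), show l - (l - i - 1 + 1) = i by omega]
      exact hyb
    · rw [hrv (l - i - 1) (by omega), show l - (l - i - 1) = i + 1 by omega]
      exact hxa
    · rw [hrv (l - j) (by omega), show l - (l - j) = j by omega, hj1]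
      exact huw

instance eg_decRel (s : Set V) [DecidableRel G.Adj] : DecidableRel (G.induce s).Adj :=
  fun a b => inferInstanceAs (Decidable (G.Adj a b))

lemma eg_degree_induce [Fintype V] [DecidableEq V] (G : SimpleGraph V) [DecidableRel G.Adj]
    (s : Set V) [DecidablePred (· ∈ s)] (u : s) :
    (G.induce s).degree u = ((G.neighborFinset (u : V)).filter (· ∈ s)).card := by
  rw [← SimpleGraph.card_neighborFinset_eq_degree]
  apply Finset.card_bij (fun (w : s) _ => (w : V))
  · intro a ha
    rw [SimpleGraph.mem_neighborFinset] at ha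
    rw [Finset.mem_filter, SimpleGraph.mem_neighborFinset]
    exact ⟨ha, a.2⟩
  · intro a _ b _ hab
    exact Subtype.ext hab
  · intro z hz
    rw [Finset.mem_filter, SimpleGraph.mem_neighborFinset] at hz
    exact ⟨⟨z, hz.2⟩, by rw [SimpleGraph.mem_neighborFinset]; exact hz.1, rfl⟩

lemma eg_lift (s : Set V) (k : ℕ)
    (h : ∃ (a b : s) (q : (G.induce s).Walk a b), q.IsPath ∧ q.length = k) :
    ∃ (a b : V) (q : G.Walk a b), q.IsPath ∧ q.length = k := by
  obtain ⟨a, b, q, hq, hql⟩ := h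
  refine ⟨a, b, q.map (SimpleGraph.Embedding.induce (G := G) s).toHom, ?_, (SimpleGraph.Walk.length_map _ _).trans hql⟩
  exact q.map_isPath_of_injective (SimpleGraph.Embedding.induce (G := G) s).injective hq

lemma eg_main : ∀ (n : ℕ) (W : Type*) [Fintype W] [DecidableEq W] (G : SimpleGraph W)
    [DecidableRel G.Adj], Fintype.card W = n → ∀ k : ℕ,
    (k - 1) * n < ∑ v, G.degree v →
    ∃ (a b : W) (q : G.Walk a b), q.IsPath ∧ q.length = k := by
  intro n
  induction n using Nat.strong_induction_on with
  | _ n IH =>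
  intro W _ _ G _ hn k h
  classical
  have hpos : 0 < ∑ v, G.degree v := lt_of_le_of_lt (Nat.zero_le _) h
  have hVpos : 0 < Fintype.card W := by
    by_contra h0
    push_neg at h0
    haveI : IsEmpty W := Fintype.card_eq_zero_iff.mp (by omega)
    simp [Finset.univ_eq_empty] at hpos
  haveI : Nonempty W := Fintype.card_pos_iff.mp hVpos
  match k with
  | 0 =>
    obtain ⟨v⟩ := ‹Nonempty W›
    exact ⟨v, v, SimpleGraph.Walk.nil, SimpleGraph.Walk.IsPath.nil, rfl⟩
  | m + 1 =>
  have h : m * n < ∑ v, G.degree v := by simpa using h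
  have hSle : ∑ v, G.degree v ≤ n * (n - 1) := by
    calc ∑ v, G.degree v ≤ ∑ _v : W, (n - 1) :=
          Finset.sum_le_sum (fun v _ => by
            have := G.degree_lt_card_verts v; rw [hn] at this; omega)
    _ = n * (n - 1) := by rw [Finset.sum_const, smul_eq_mul, Finset.card_univ, hn]
  have hcard2 : m + 2 ≤ n := by
    by_contra hcc
    push_neg at hcc
    have h1 : n - 1 ≤ m := by omega
    have h2 : n * (n - 1) ≤ m * n := by
      calc n * (n - 1) = (n - 1) * n := Nat.mul_comm _ _
      _ ≤ m * n := Nat.mul_le_mul_right _ h1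
    omega
  by_cases hA : ∃ v, 2 * G.degree v ≤ m
  · obtain ⟨v, hv⟩ := hA
    set s : Set W := {u | u ≠ v} with hsdef
    have hcs : Fintype.card s = n - 1 := by
      have h1 : Fintype.card s = Fintype.card {u // ¬ (u = v)} :=
        Fintype.card_congr (Equiv.subtypeEquivRight (by simp [hsdef]))
      rw [h1, Fintype.card_subtype_compl, Fintype.card_subtype_eq, hn]
    -- per-vertex degree identity
    have hdeg1 : ∀ u : s, (G.induce s).degree u + (if G.Adj (u : W) v then 1 else 0)
        = G.degree (u : W) := by
      intro u
      rw [eg_degree_induce G s u]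
      have hfe : (G.neighborFinset (u : W)).filter (· ∈ s) =
          (G.neighborFinset (u : W)).erase v := by
        ext z
        simp [hsdef, Finset.mem_erase, and_comm]
      rw [hfe]
      by_cases hadj : G.Adj (u : W) v
      · rw [if_pos hadj, Finset.card_erase_of_mem (by rwa [SimpleGraph.mem_neighborFinset]),
          ← SimpleGraph.card_neighborFinset_eq_degree]
        have hpos' : 0 < (G.neighborFinset (u : W)).card :=
          Finset.card_pos.mpr ⟨v, by rwa [SimpleGraph.mem_neighborFinset]⟩
        omega
      · rw [if_neg hadj, Finset.erase_eq_of_notMem (by rwa [SimpleGraph.mem_neighborFinset]),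
          SimpleGraph.card_neighborFinset_eq_degree]
        omega
    have hsum1 : ∀ (F : W → ℕ), ∑ u : s, F (u : W) = ∑ u ∈ Finset.univ.erase v, F u := by
      intro F
      exact (Finset.sum_subtype (Finset.univ.erase v) (fun u => by simp [hsdef]) F).symm
    have hadjcount : ∑ u ∈ Finset.univ.erase v, (if G.Adj u v then 1 else 0) = G.degree v := by
      rw [Finset.sum_boole]
      have hfe : (Finset.univ.erase v).filter (fun u => G.Adj u v) = G.neighborFinset v := by
        ext z
        simp only [Finset.mem_filter, Finset.mem_erase, Finset.mem_univ, true_and,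
          and_true, SimpleGraph.mem_neighborFinset]
        constructor
        · rintro ⟨-, h2⟩; exact h2.symm
        · intro h2; exact ⟨h2.ne', h2.symm⟩
      rw [hfe, SimpleGraph.card_neighborFinset_eq_degree]
      simp
    have key : ∑ u : s, (G.induce s).degree u + 2 * G.degree v = ∑ w, G.degree w := by
      have e1 : ∑ u : s, ((G.induce s).degree u + (if G.Adj (u : W) v then 1 else 0))
          = ∑ u : s, G.degree (u : W) := Finset.sum_congr rfl (fun u _ => hdeg1 u)
      rw [Finset.sum_add_distrib] at e1
      have e2 : ∑ u : s, (if G.Adj (u : W) v then 1 else 0)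
          = ∑ u ∈ Finset.univ.erase v, (if G.Adj u v then 1 else 0) :=
        hsum1 (fun u => if G.Adj u v then 1 else 0)
      have e3 : ∑ u : s, G.degree (u : W) = ∑ u ∈ Finset.univ.erase v, G.degree u :=
        hsum1 (fun u => G.degree u)
      have e4 : ∑ u ∈ Finset.univ.erase v, G.degree u + G.degree v = ∑ w, G.degree w := by
        rw [Finset.sum_erase_add Finset.univ _ (Finset.mem_univ v)]
      omega
    have hrec : m * (n - 1) < ∑ u : s, (G.induce s).degree u := by
      have e : m * (n - 1) + m = m * n := by
        rw [← Nat.mul_succ]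
        congr 1
        omega
      omega
    exact eg_lift s (m + 1) (IH (n - 1) (by omega) s (G.induce s) hcs (m + 1) (by simpa using hrec))
  · push_neg at hA
    by_cases hcon : G.Connected
    · exact eg_connected hcon (m + 1) (fun v => by have := hA v; omega) (by omega)
    · rw [SimpleGraph.connected_iff] at hcon
      push_neg at hcon
      have hpre : ¬ G.Preconnected := fun hp => (hcon hp).elim ‹Nonempty W›.some
      rw [SimpleGraph.Preconnected] at hpre
      push_neg at hpre
      obtain ⟨a, b, hab⟩ := hpre
      set s : Set W := {w | G.Reachable a w} with hsdef
      haveI : DecidablePred (· ∈ s) := Classical.decPred _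
      have hclosed : ∀ {u w : W}, G.Adj u w → u ∈ s → w ∈ s := by
        intro u w huw hu
        exact hu.trans huw.reachable
      have ha : a ∈ s := SimpleGraph.Reachable.refl a
      have hb : b ∉ s := hab
      set S : Finset W := Finset.univ.filter (· ∈ s) with hSdef
      have hdegs : ∀ u : s, (G.induce s).degree u = G.degree (u : W) := by
        intro u
        rw [eg_degree_induce G s u, Finset.filter_true_of_mem,
          SimpleGraph.card_neighborFinset_eq_degree]
        intro z hz
        rw [SimpleGraph.mem_neighborFinset] at hz
        exact hclosed hz u.2
      have hdegt : ∀ u : (sᶜ : Set W), (G.induce sᶜ).degree u = G.degree (u : W) := by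
        intro u
        rw [eg_degree_induce G sᶜ u, Finset.filter_true_of_mem,
          SimpleGraph.card_neighborFinset_eq_degree]
        intro z hz
        rw [SimpleGraph.mem_neighborFinset] at hz
        intro hzs
        exact u.2 (hclosed hz.symm hzs)
      have hsum2 : ∑ u : s, G.degree (u : W) = ∑ u ∈ S, G.degree u :=
        (Finset.sum_subtype S (by simp [hSdef]) (fun u => G.degree u)).symm
      have hsum3 : ∑ u : (sᶜ : Set W), G.degree (u : W) = ∑ u ∈ Sᶜ, G.degree u :=
        (Finset.sum_subtype Sᶜ (by simp [hSdef]) (fun u => G.degree u)).symm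
      have hsplit : ∑ u ∈ S, G.degree u + ∑ u ∈ Sᶜ, G.degree u = ∑ w, G.degree w :=
        Finset.sum_add_sum_compl S _
      have hcardS : Fintype.card s = S.card := by
        rw [hSdef]
        exact Fintype.card_subtype _
      have hcardT : Fintype.card (sᶜ : Set W) = Sᶜ.card := by
        have h1 : Fintype.card (sᶜ : Set W) =
            (Finset.univ.filter (· ∈ (sᶜ : Set W))).card := Fintype.card_subtype _
        rw [h1]
        congr 1
        ext z
        simp [hSdef]
      have hcards : S.card + Sᶜ.card = n := by
        have h1 : Sᶜ.card = Fintype.card W - S.card := Finset.card_compl S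
        have h2 : S.card ≤ Fintype.card W := Finset.card_le_univ S
        omega
      have hSpos : 0 < S.card := Finset.card_pos.mpr ⟨a, by simp [hSdef, ha]⟩
      have hTpos : 0 < Sᶜ.card := Finset.card_pos.mpr ⟨b, by simp [hSdef, hb]⟩
      have hmul : m * S.card + m * Sᶜ.card = m * n := by rw [← Nat.mul_add, hcards]
      by_cases hside : m * S.card < ∑ u ∈ S, G.degree u
      · apply eg_lift s (m + 1)
        apply IH S.card (by omega) s (G.induce s) hcardS (m + 1)
        simp only [Nat.add_sub_cancel]
        calc m * S.card < ∑ u ∈ S, G.degree u := hside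
        _ = ∑ u : s, G.degree (u : W) := hsum2.symm
        _ = ∑ u : s, (G.induce s).degree u := Finset.sum_congr rfl (fun u _ => (hdegs u).symm)
      · have hside2 : m * Sᶜ.card < ∑ u ∈ Sᶜ, G.degree u := by omega
        apply eg_lift sᶜ (m + 1)
        apply IH Sᶜ.card (by omega) (sᶜ : Set W) (G.induce sᶜ) hcardT (m + 1)
        simp only [Nat.add_sub_cancel]
        calc m * Sᶜ.card < ∑ u ∈ Sᶜ, G.degree u := hside2
        _ = ∑ u : (sᶜ : Set W), G.degree (u : W) := hsum3.symm
        _ = ∑ u : (sᶜ : Set W), (G.induce sᶜ).degree u :=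
            Finset.sum_congr rfl (fun u _ => (hdegt u).symm)

end EG


/-- Erdős–Gallai: any graph with average degree `d(G) > k - 1` contains a path of length
`k`, where `d(G) = 2 e(G) / v(G)`. -/
theorem stmt10 {V : Type*} [Fintype V] [DecidableEq V] [Nonempty V]
    (G : SimpleGraph V) [DecidableRel G.Adj] (k : ℕ)
    (h : (k : ℝ) - 1 < 2 * (G.edgeFinset.card : ℝ) / (Fintype.card V : ℝ)) :
    ∃ (x y : V) (p : G.Walk x y), p.IsPath ∧ p.length = k := by
  rcases Nat.eq_zero_or_pos k with rfl | hk
  · obtain ⟨v⟩ := ‹Nonempty V›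
    exact ⟨v, v, SimpleGraph.Walk.nil, SimpleGraph.Walk.IsPath.nil, rfl⟩
  · apply eg_main (Fintype.card V) V G rfl k
    have hn0 : (0 : ℝ) < (Fintype.card V : ℝ) := by
      exact_mod_cast Fintype.card_pos
    have h2 : ((k : ℝ) - 1) * (Fintype.card V : ℝ) < 2 * (G.edgeFinset.card : ℝ) :=
      (lt_div_iff₀ hn0).mp h
    have h3 : ((k - 1 : ℕ) : ℝ) = (k : ℝ) - 1 := by
      rw [Nat.cast_sub hk, Nat.cast_one]
    rw [SimpleGraph.sum_degrees_eq_twice_card_edges]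
    rw [← h3] at h2
    exact_mod_cast h2
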